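/- The operators σ̂_{ba} of the vector representation of U_q[osp(2|n)] satisfy the induction relations: for all a, b, c ∈ I with ε_b > ε_c > ε_a, c ≠ ā and c ≠ b̄, one has σ̂_{ba} = q^{−(ε_b, ε_a)} σ̂_{bc} σ̂_{ca} − q^{−(ε_c, ε_c)} (−1)^{([b]+[c])([a]+[c])} σ̂_{ca} σ̂_{bc}. -/

import Mathlib

open Matrix BigOperators

namespace Osp2n

/-- Index set `I = {e1,e2} ∪ {o1,…,o(2k)}`: `inl` indices are even, `inr` odd. -/
abbrev Idx (k : ℕ) := Fin 2 ⊕ Fin (2*k)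

/-- parity `[a]` -/
def par {k : ℕ} : Idx k → ℕ
  | .inl _ => 0
  | .inr _ => 1

/-- conjugation of indices: `ē1 = e2`, `ē2 = e1`, `ōμ = o(n+1−μ)` -/
def bar {k : ℕ} : Idx k → Idx k
  | .inl i => .inl i.rev
  | .inr j => .inr j.rev

/-- sign factor `ξ_a` -/
def xi {k : ℕ} : Idx k → ℝ
  | .inl _ => 1
  | .inr j => (-1 : ℝ) ^ ((j : ℕ) + 1)

/-- weight of an index, in `ℚ^{k+1}`; coordinates `0,…,k-1` are `δ_1,…,δ_k`,
coordinate `k` is `ε_1`. -/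
def wt {k : ℕ} : Idx k → (Fin (k+1) → ℚ)
  | .inl i => if i = 0 then Pi.single (Fin.last k) 1 else -(Pi.single (Fin.last k) 1)
  | .inr j =>
      if h : (j : ℕ) < k then Pi.single ⟨j, by omega⟩ 1
      else -(Pi.single ⟨2*k - 1 - (j:ℕ), by have := j.isLt; omega⟩ 1)

/-- the invariant bilinear form: `(ε_1,ε_1)=1`, `(δ_μ,δ_ν)=−δ_{μν}`, `(ε_1,δ_μ)=0`. -/
def bform {k : ℕ} (u v : Fin (k+1) → ℚ) : ℚ :=
  u (Fin.last k) * v (Fin.last k) - ∑ μ : Fin k, u μ.castSucc * v μ.castSucc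

/-- the graded half-sum of positive roots `ρ = Σ_{μ=1}^k (k−μ) δ_μ`. -/
def rho (k : ℕ) : Fin (k+1) → ℚ :=
  fun i => if (i:ℕ) < k then (k : ℚ) - 1 - ((i:ℕ) : ℚ) else 0

/-- rank realising the total order
`δ_1 > … > δ_k > ε_1 > −ε_1 > −δ_k > … > −δ_1` on the weights of indices:
`ε_b > ε_a` iff `rk b < rk a`. -/
def rk {k : ℕ} : Idx k → ℕ
  | .inl i => if i = 0 then k else k + 1
  | .inr j => if (j:ℕ) < k then (j:ℕ) else (j:ℕ) + 2

/-- real power `q^r` for rational `r` -/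
noncomputable def qp (q : ℝ) (r : ℚ) : ℝ := q ^ (r : ℝ)

/-- elementary matrix `E^a_b` -/
def E {k : ℕ} (a b : Idx k) : Matrix (Idx k) (Idx k) ℝ := Matrix.single a b 1

/-- `σ̃_{ba} = E^b_a − (−1)^{[b]([a]+[b])} ξ_a ξ_b q^{(ρ,ε_a−ε_b)} E^{ā}_{b̄}`
(for `ε_b > ε_a`). -/
noncomputable def sigT {k : ℕ} (q : ℝ) (b a : Idx k) : Matrix (Idx k) (Idx k) ℝ :=
  E b a - ((-1:ℝ) ^ (par b * (par a + par b)) * xi a * xi b *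
    qp q (bform (rho k) (wt a - wt b))) • E (bar a) (bar b)

/-- `σ̃_{ab} = E^a_b − (−1)^{[a]([a]+[b])} ξ_a ξ_b q^{(ρ,ε_a−ε_b)} E^{b̄}_{ā}`
(for `ε_b > ε_a`). -/
noncomputable def sigTop {k : ℕ} (q : ℝ) (a b : Idx k) : Matrix (Idx k) (Idx k) ℝ :=
  E a b - ((-1:ℝ) ^ (par a * (par a + par b)) * xi a * xi b *
    qp q (bform (rho k) (wt a - wt b))) • E (bar b) (bar a)

/-- the vector-representation operator
`σ̂_{ba} = q^{−(ε_a,ε_b)} E^b_a − (−1)^{[b]([a]+[b])} ξ_a ξ_b q^{(ε_a,ε_a)} q^{(ρ,ε_a−ε_b)} E^{ā}_{b̄}`. -/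
noncomputable def sigH {k : ℕ} (q : ℝ) (b a : Idx k) : Matrix (Idx k) (Idx k) ℝ :=
  qp q (-(bform (wt a) (wt b))) • E b a -
    ((-1:ℝ) ^ (par b * (par a + par b)) * xi a * xi b * qp q (bform (wt a) (wt a)) *
      qp q (bform (rho k) (wt a - wt b))) • E (bar a) (bar b)

/-- graded Kronecker product `X ⊗̂ Y` where `Y` is homogeneous of parity `p`:
`(X ⊗̂ Y)_{(a,b),(c,d)} = (−1)^{p·[c]} X_{ac} Y_{bd}`. -/
def gkron {k : ℕ} (p : ℕ) (X Y : Matrix (Idx k) (Idx k) ℝ) :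
    Matrix (Idx k × Idx k) (Idx k × Idx k) ℝ :=
  Matrix.of fun r c => (-1:ℝ) ^ (p * par c.1) * X r.1 c.1 * Y r.2 c.2

/-- the R-matrix of the vector representation:
`𝕽 = Σ_{a,b} q^{(ε_a,ε_b)} E^a_a ⊗̂ E^b_b + (q−q⁻¹) Σ_{ε_b>ε_a} (−1)^{[b]} E^a_b ⊗̂ σ̃_{ba}`. -/
noncomputable def Rmat (k : ℕ) (q : ℝ) : Matrix (Idx k × Idx k) (Idx k × Idx k) ℝ :=
  (∑ a : Idx k, ∑ b : Idx k, qp q (bform (wt a) (wt b)) • gkron 0 (E a a) (E b b))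
  + (q - q⁻¹) • ∑ a : Idx k, ∑ b : Idx k,
      if rk b < rk a then ((-1:ℝ) ^ par b) • gkron (par a + par b) (E a b) (sigT q b a) else 0

/-- the opposite R-matrix of the vector representation:
`𝕽^T = Σ_{a,b} q^{(ε_a,ε_b)} E^a_a ⊗̂ E^b_b + (q−q⁻¹) Σ_{ε_b>ε_a} (−1)^{[a]} E^b_a ⊗̂ σ̃_{ab}`. -/
noncomputable def RmatT (k : ℕ) (q : ℝ) : Matrix (Idx k × Idx k) (Idx k × Idx k) ℝ :=
  (∑ a : Idx k, ∑ b : Idx k, qp q (bform (wt a) (wt b)) • gkron 0 (E a a) (E b b))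
  + (q - q⁻¹) • ∑ a : Idx k, ∑ b : Idx k,
      if rk b < rk a then ((-1:ℝ) ^ par a) • gkron (par a + par b) (E b a) (sigTop q a b) else 0

/-- `𝕽₁₂ = 𝕽 ⊗ 1` -/
noncomputable def R12 (k : ℕ) (q : ℝ) :
    Matrix (Idx k × Idx k × Idx k) (Idx k × Idx k × Idx k) ℝ :=
  Matrix.of fun r c => Rmat k q (r.1, r.2.1) (c.1, c.2.1) * (if r.2.2 = c.2.2 then (1:ℝ) else 0)

/-- `𝕽₂₃ = 1 ⊗ 𝕽` -/
noncomputable def R23 (k : ℕ) (q : ℝ) :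
    Matrix (Idx k × Idx k × Idx k) (Idx k × Idx k × Idx k) ℝ :=
  Matrix.of fun r c => (if r.1 = c.1 then (1:ℝ) else 0) * Rmat k q (r.2.1, r.2.2) (c.2.1, c.2.2)

/-- `𝕽₁₃`, defined termwise with the grading sign
`(𝕽₁₃)_{(a,b,c),(d,e,f)} = Σ_t (−1)^{p_t([d]+[e])} (x_t)_{ad} δ_{be} (y_t)_{cf}`. -/
noncomputable def R13 (k : ℕ) (q : ℝ) :
    Matrix (Idx k × Idx k × Idx k) (Idx k × Idx k × Idx k) ℝ :=
  Matrix.of fun r c =>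
    (∑ x : Idx k, ∑ y : Idx k, qp q (bform (wt x) (wt y)) *
        E x x r.1 c.1 * (if r.2.1 = c.2.1 then (1:ℝ) else 0) * E y y r.2.2 c.2.2)
    + (q - q⁻¹) * ∑ a : Idx k, ∑ b : Idx k,
        if rk b < rk a then
          (-1:ℝ) ^ par b * (-1:ℝ) ^ ((par a + par b) * (par c.1 + par c.2.1)) *
            E a b r.1 c.1 * (if r.2.1 = c.2.1 then (1:ℝ) else 0) * sigT q b a r.2.2 c.2.2
        else 0

/-- `𝕽^T₁₂ = 𝕽^T ⊗ 1` -/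
noncomputable def R12T (k : ℕ) (q : ℝ) :
    Matrix (Idx k × Idx k × Idx k) (Idx k × Idx k × Idx k) ℝ :=
  Matrix.of fun r c => RmatT k q (r.1, r.2.1) (c.1, c.2.1) * (if r.2.2 = c.2.2 then (1:ℝ) else 0)

/-- `𝕽^T₂₃ = 1 ⊗ 𝕽^T` -/
noncomputable def R23T (k : ℕ) (q : ℝ) :
    Matrix (Idx k × Idx k × Idx k) (Idx k × Idx k × Idx k) ℝ :=
  Matrix.of fun r c => (if r.1 = c.1 then (1:ℝ) else 0) * RmatT k q (r.2.1, r.2.2) (c.2.1, c.2.2)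

/-- `𝕽^T₁₃`, defined termwise with the grading sign. -/
noncomputable def R13T (k : ℕ) (q : ℝ) :
    Matrix (Idx k × Idx k × Idx k) (Idx k × Idx k × Idx k) ℝ :=
  Matrix.of fun r c =>
    (∑ x : Idx k, ∑ y : Idx k, qp q (bform (wt x) (wt y)) *
        E x x r.1 c.1 * (if r.2.1 = c.2.1 then (1:ℝ) else 0) * E y y r.2.2 c.2.2)
    + (q - q⁻¹) * ∑ a : Idx k, ∑ b : Idx k,
        if rk b < rk a then
          (-1:ℝ) ^ par a * (-1:ℝ) ^ ((par a + par b) * (par c.1 + par c.2.1)) *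
            E b a r.1 c.1 * (if r.2.1 = c.2.1 then (1:ℝ) else 0) * sigTop q a b r.2.2 c.2.2
        else 0

/-- simple root indices: `inl μ ↦ α_{μ+1}` (1-based, `μ+1 ∈ {1,…,k−1}`), `inr 0 ↦ α_s`,
`inr 1 ↦ α_t`. -/
abbrev SIdx (k : ℕ) := Fin (k-1) ⊕ Fin 2

/-- parity of a simple root -/
def spar {k : ℕ} : SIdx k → ℕ
  | .inl _ => 0
  | .inr _ => 1

/-- the simple roots: `α_μ = δ_μ − δ_{μ+1}` for `1 ≤ μ < k`, `α_s = δ_k − ε_1`,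
`α_t = δ_k + ε_1`. -/
def alph {k : ℕ} : SIdx k → (Fin (k+1) → ℚ)
  | .inl μ => Pi.single ⟨(μ:ℕ), by have := μ.isLt; omega⟩ 1
      - Pi.single ⟨(μ:ℕ)+1, by have := μ.isLt; omega⟩ 1
  | .inr i => (Pi.single (⟨k-1, by omega⟩ : Fin (k+1)) 1 : Fin (k+1) → ℚ)
      + Pi.single (Fin.last k) (if i = 0 then (-1:ℚ) else 1)

/-- vector representation of the raising generators -/
noncomputable def em {k : ℕ} (hk : 1 ≤ k) : SIdx k → Matrix (Idx k) (Idx k) ℝ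
  | .inl μ =>
      E (.inr ⟨(μ:ℕ), by have := μ.isLt; omega⟩) (.inr ⟨(μ:ℕ)+1, by have := μ.isLt; omega⟩)
    + E (.inr ⟨2*k-(μ:ℕ)-2, by have := μ.isLt; omega⟩)
        (.inr ⟨2*k-(μ:ℕ)-1, by have := μ.isLt; omega⟩)
  | .inr i =>
      if i = 0 then
        E (.inr ⟨k-1, by omega⟩) (.inl 0) + ((-1:ℝ)^k) • E (.inl 1) (.inr ⟨k, by omega⟩)
      else
        E (.inr ⟨k-1, by omega⟩) (.inl 1) + ((-1:ℝ)^k) • E (.inl 0) (.inr ⟨k, by omega⟩)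

/-- vector representation of the lowering generators -/
noncomputable def fm {k : ℕ} (hk : 1 ≤ k) : SIdx k → Matrix (Idx k) (Idx k) ℝ
  | .inl μ =>
      E (.inr ⟨(μ:ℕ)+1, by have := μ.isLt; omega⟩) (.inr ⟨(μ:ℕ), by have := μ.isLt; omega⟩)
    + E (.inr ⟨2*k-(μ:ℕ)-1, by have := μ.isLt; omega⟩)
        (.inr ⟨2*k-(μ:ℕ)-2, by have := μ.isLt; omega⟩)
  | .inr i =>
      if i = 0 then
        -E (.inl 0) (.inr ⟨k-1, by omega⟩) + ((-1:ℝ)^k) • E (.inr ⟨k, by omega⟩) (.inl 1)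
      else
        -E (.inl 1) (.inr ⟨k-1, by omega⟩) + ((-1:ℝ)^k) • E (.inr ⟨k, by omega⟩) (.inl 0)

/-- vector representation of the Cartan generators -/
noncomputable def hm {k : ℕ} (hk : 1 ≤ k) : SIdx k → Matrix (Idx k) (Idx k) ℝ
  | .inl μ =>
      E (.inr ⟨(μ:ℕ)+1, by have := μ.isLt; omega⟩) (.inr ⟨(μ:ℕ)+1, by have := μ.isLt; omega⟩)
    - E (.inr ⟨2*k-(μ:ℕ)-2, by have := μ.isLt; omega⟩)
        (.inr ⟨2*k-(μ:ℕ)-2, by have := μ.isLt; omega⟩)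
    - E (.inr ⟨(μ:ℕ), by have := μ.isLt; omega⟩) (.inr ⟨(μ:ℕ), by have := μ.isLt; omega⟩)
    + E (.inr ⟨2*k-(μ:ℕ)-1, by have := μ.isLt; omega⟩)
        (.inr ⟨2*k-(μ:ℕ)-1, by have := μ.isLt; omega⟩)
  | .inr i =>
      if i = 0 then
        -E (.inl 0) (.inl 0) + E (.inl 1) (.inl 1)
        - E (.inr ⟨k-1, by omega⟩) (.inr ⟨k-1, by omega⟩)
        + E (.inr ⟨k, by omega⟩) (.inr ⟨k, by omega⟩)
      else
        E (.inl 0) (.inl 0) - E (.inl 1) (.inl 1)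
        - E (.inr ⟨k-1, by omega⟩) (.inr ⟨k-1, by omega⟩)
        + E (.inr ⟨k, by omega⟩) (.inr ⟨k, by omega⟩)

/-- `q^{r·h_c}`: the diagonal matrix `Σ_a q^{r·(α_c,ε_a)} E^a_a` -/
noncomputable def qh {k : ℕ} (q : ℝ) (r : ℚ) (c : SIdx k) : Matrix (Idx k) (Idx k) ℝ :=
  Matrix.diagonal (fun a => qp q (r * bform (alph c) (wt a)))

/-- graded conjugation `†`, the linear map with `(E^a_b)† = (−1)^{[a]([a]+[b])} E^b_a`. -/
def dag {k : ℕ} (X : Matrix (Idx k) (Idx k) ℝ) : Matrix (Idx k) (Idx k) ℝ :=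
  Matrix.of fun i j => (-1:ℝ) ^ (par j * (par j + par i)) * X j i

/-- the q-bracket `[x,y]_q = xy − (−1)^{p_x p_y} q^{(λ_x,λ_y)} yx` of matrices carrying
weights `lx, ly` and parities `px, py`. -/
noncomputable def qbr {k : ℕ} (q : ℝ) (lx ly : Fin (k+1) → ℚ) (px py : ℕ)
    (x y : Matrix (Idx k) (Idx k) ℝ) : Matrix (Idx k) (Idx k) ℝ :=
  x * y - ((-1:ℝ) ^ (px * py) * qp q (bform lx ly)) • (y * x)

end Osp2n

namespace Osp2n

/- ### Auxiliary lemmas -/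

lemma qp_add' {q : ℝ} (hq : 0 < q) (r s : ℚ) : qp q (r + s) = qp q r * qp q s := by
  unfold qp; push_cast; exact Real.rpow_add hq _ _

lemma qp_zero' (q : ℝ) : qp q 0 = 1 := by simp [qp]

lemma bform_comm' {k : ℕ} (u v : Fin (k+1) → ℚ) : bform u v = bform v u := by
  simp [bform, mul_comm]

lemma bform_sub_right' {k : ℕ} (u v w : Fin (k+1) → ℚ) :
    bform u (v - w) = bform u v - bform u w := by
  simp only [bform, Pi.sub_apply, mul_sub, Finset.sum_sub_distrib]; ring

lemma bform_neg_left' {k : ℕ} (u v : Fin (k+1) → ℚ) : bform (-u) v = -bform u v := by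
  simp only [bform, Pi.neg_apply, neg_mul, Finset.sum_neg_distrib]; ring

lemma bform_neg_right' {k : ℕ} (u v : Fin (k+1) → ℚ) : bform u (-v) = -bform u v := by
  simp only [bform, Pi.neg_apply, mul_neg, Finset.sum_neg_distrib]; ring

lemma bform_single_ortho' {k : ℕ} {i j : Fin (k+1)} (hij : i ≠ j) (x y : ℚ) :
    bform (Pi.single i x) (Pi.single j y) = 0 := by
  simp only [bform, Pi.single_apply]
  rw [Finset.sum_eq_zero, sub_zero]
  · split_ifs with h1 h2 <;> simp_all
  · intro μ _
    split_ifs with h1 h2 <;> simp_all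

lemma bform_pm' {k : ℕ} {i j : Fin (k+1)} (hij : i ≠ j) (u v : Fin (k+1) → ℚ)
    (hu : u = Pi.single i 1 ∨ u = -(Pi.single i 1))
    (hv : v = Pi.single j 1 ∨ v = -(Pi.single j 1)) : bform u v = 0 := by
  rcases hu with rfl | rfl <;> rcases hv with rfl | rfl <;>
    simp [bform_neg_left', bform_neg_right', bform_single_ortho' hij]

lemma wt_inl_pm {k : ℕ} (i : Fin 2) :
    wt (Sum.inl i : Idx k) = Pi.single (Fin.last k) (1:ℚ) ∨
      wt (Sum.inl i : Idx k) = -(Pi.single (Fin.last k) (1:ℚ)) := by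
  by_cases hi : i = 0 <;> simp [wt, hi]

lemma bform_wt_zero {k : ℕ} (x y : Idx k) (hxy : x ≠ y) (hxy' : x ≠ bar y) :
    bform (wt x) (wt y) = 0 := by
  cases x with
  | inl i =>
    cases y with
    | inl i' =>
        exfalso
        simp only [bar, ne_eq, Sum.inl.injEq] at hxy hxy'
        rw [Fin.ext_iff] at hxy hxy'
        rw [Fin.val_rev] at hxy'
        have := i.isLt; have := i'.isLt
        omega
    | inr j' =>
        have hj' := j'.isLt
        by_cases hj : (j' : ℕ) < k
        · refine bform_pm' (i := Fin.last k) (j := ⟨(j':ℕ), by omega⟩) ?_ _ _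
            (wt_inl_pm i) (Or.inl (by simp [wt, hj]))
          simp only [ne_eq, Fin.ext_iff, Fin.val_last]; omega
        · refine bform_pm' (i := Fin.last k) (j := ⟨2*k - 1 - (j':ℕ), by omega⟩) ?_ _ _
            (wt_inl_pm i) (Or.inr (by simp [wt, hj]))
          simp only [ne_eq, Fin.ext_iff, Fin.val_last]; omega
  | inr j =>
    have hjlt := j.isLt
    cases y with
    | inl i' =>
        by_cases hj : (j : ℕ) < k
        · refine bform_pm' (i := ⟨(j:ℕ), by omega⟩) (j := Fin.last k) ?_ _ _
            (Or.inl (by simp [wt, hj])) (wt_inl_pm i')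
          simp only [ne_eq, Fin.ext_iff, Fin.val_last]; omega
        · refine bform_pm' (i := ⟨2*k - 1 - (j:ℕ), by omega⟩) (j := Fin.last k) ?_ _ _
            (Or.inr (by simp [wt, hj])) (wt_inl_pm i')
          simp only [ne_eq, Fin.ext_iff, Fin.val_last]; omega
    | inr j' =>
        have hj'lt := j'.isLt
        simp only [bar, ne_eq, Sum.inr.injEq] at hxy hxy'
        rw [Fin.ext_iff] at hxy hxy'
        rw [Fin.val_rev] at hxy'
        by_cases hj : (j : ℕ) < k <;> by_cases hj2 : (j' : ℕ) < k
        · refine bform_pm' (i := ⟨(j:ℕ), by omega⟩) (j := ⟨(j':ℕ), by omega⟩) ?_ _ _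
            (Or.inl (by simp [wt, hj])) (Or.inl (by simp [wt, hj2]))
          simp only [ne_eq, Fin.ext_iff]; omega
        · refine bform_pm' (i := ⟨(j:ℕ), by omega⟩) (j := ⟨2*k - 1 - (j':ℕ), by omega⟩) ?_ _ _
            (Or.inl (by simp [wt, hj])) (Or.inr (by simp [wt, hj2]))
          simp only [ne_eq, Fin.ext_iff]; omega
        · refine bform_pm' (i := ⟨2*k - 1 - (j:ℕ), by omega⟩) (j := ⟨(j':ℕ), by omega⟩) ?_ _ _
            (Or.inr (by simp [wt, hj])) (Or.inl (by simp [wt, hj2]))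
          simp only [ne_eq, Fin.ext_iff]; omega
        · refine bform_pm' (i := ⟨2*k - 1 - (j:ℕ), by omega⟩)
            (j := ⟨2*k - 1 - (j':ℕ), by omega⟩) ?_ _ _
            (Or.inr (by simp [wt, hj])) (Or.inr (by simp [wt, hj2]))
          simp only [ne_eq, Fin.ext_iff]; omega

lemma xi_sq {k : ℕ} (c : Idx k) : xi c * xi c = 1 := by
  cases c with
  | inl i => simp [xi]
  | inr j =>
      show ((-1:ℝ)) ^ ((j:ℕ)+1) * (-1) ^ ((j:ℕ)+1) = 1
      rw [← pow_add]
      exact Even.neg_one_pow ⟨(j:ℕ)+1, by ring⟩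

lemma par_cases {k : ℕ} (x : Idx k) : par x = 0 ∨ par x = 1 := by
  cases x <;> simp [par]

/-- The induction relations for the σ̂-operators of the vector
representation: for `ε_b > ε_c > ε_a` with `c ≠ ā`, `c ≠ b̄`,
`σ̂_{ba} = q^{−(ε_b,ε_a)} σ̂_{bc} σ̂_{ca}
          − q^{−(ε_c,ε_c)} (−1)^{([b]+[c])([a]+[c])} σ̂_{ca} σ̂_{bc}`. -/
theorem induction_relations (k : ℕ) (hk : 1 ≤ k) (q : ℝ) (hq : 0 < q) (hq1 : q ≠ 1)
    (a b c : Idx k) (hbc : rk b < rk c) (hca : rk c < rk a)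
    (h1 : c ≠ bar a) (h2 : c ≠ bar b) :
    sigH q b a
    = qp q (-(bform (wt b) (wt a))) • (sigH q b c * sigH q c a)
      - ((-1:ℝ) ^ ((par b + par c) * (par a + par c)) * qp q (-(bform (wt c) (wt c)))) •
          (sigH q c a * sigH q b c) := by
  have hbarbar : ∀ x : Idx k, bar (bar x) = x := by
    intro x; cases x <;> simp [bar, Fin.rev_rev]
  have hba : b ≠ a := by rintro rfl; omega
  have hcb : c ≠ b := by rintro rfl; omega
  have hcane : c ≠ a := by rintro rfl; omega
  have hbarba : bar b ≠ bar a := fun h => hba (by rw [← hbarbar b, h, hbarbar])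
  have hbarbc : bar b ≠ c := fun h => h2 h.symm
  have habarc : a ≠ bar c := fun h => h1 (by rw [h, hbarbar])
  have hbarcb : bar c ≠ b := fun h => h2 (by rw [← h, hbarbar])
  have hab : a ≠ b := fun h => hba h.symm
  have Emul : ∀ x y z w : Idx k, E x y * E z w = if y = z then E x w else 0 := by
    intro x y z w
    by_cases h : y = z
    · subst h; simp [E, Matrix.single_mul_single_same]
    · rw [if_neg h]; exact Matrix.single_mul_single_of_ne (c := (1:ℝ)) x y z h 1
  have P1 : sigH q b c * sigH q c a =
      (qp q (-(bform (wt a) (wt c))) * qp q (-(bform (wt c) (wt b)))) • E b a := by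
    simp only [sigH, sub_mul, mul_sub, smul_mul_assoc, mul_smul_comm, smul_smul, Emul]
    rw [if_neg h1, if_neg hbarbc, if_neg hbarba]
    simp [smul_smul]
  have P2 : sigH q c a * sigH q b c =
      ((((-1:ℝ) ^ (par b * (par c + par b)) * xi c * xi b * qp q (bform (wt c) (wt c)) *
          qp q (bform (rho k) (wt c - wt b))) *
        ((-1:ℝ) ^ (par c * (par a + par c)) * xi a * xi c * qp q (bform (wt a) (wt a)) *
          qp q (bform (rho k) (wt a - wt c))))) • E (bar a) (bar b) := by
    simp only [sigH, sub_mul, mul_sub, smul_mul_assoc, mul_smul_comm, smul_smul, Emul]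
    rw [if_neg hab, if_neg habarc, if_neg hbarcb]
    simp [smul_smul]
  rw [P1, P2, smul_smul, smul_smul]
  have o1 : bform (wt c) (wt b) = 0 := bform_wt_zero c b hcb h2
  have o2 : bform (wt a) (wt c) = 0 := by rw [bform_comm']; exact bform_wt_zero c a hcane h1
  have o3 : bform (wt b) (wt a) = bform (wt a) (wt b) := bform_comm' _ _
  have hcoef1 : qp q (-(bform (wt b) (wt a))) *
      (qp q (-(bform (wt a) (wt c))) * qp q (-(bform (wt c) (wt b)))) =
      qp q (-(bform (wt a) (wt b))) := by
    rw [o1, o2, o3]; simp [qp_zero']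
  have hR : qp q (bform (rho k) (wt a - wt c)) * qp q (bform (rho k) (wt c - wt b)) =
      qp q (bform (rho k) (wt a - wt b)) := by
    rw [← qp_add' hq]; congr 1
    rw [bform_sub_right', bform_sub_right', bform_sub_right']; ring
  have hQ : qp q (-(bform (wt c) (wt c))) * qp q (bform (wt c) (wt c)) = 1 := by
    rw [← qp_add' hq]; simp [qp_zero']
  have hsgn : ((-1:ℝ)) ^ ((par b + par c) * (par a + par c)) *
      ((-1:ℝ) ^ (par c * (par a + par c)) * (-1:ℝ) ^ (par b * (par c + par b))) =
      (-1:ℝ) ^ (par b * (par a + par b)) := by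
    rcases par_cases a with h | h <;> rcases par_cases b with h' | h' <;>
      rcases par_cases c with h'' | h'' <;> rw [h, h', h''] <;> norm_num
  have hcoef2 : ((-1:ℝ) ^ ((par b + par c) * (par a + par c)) *
        qp q (-(bform (wt c) (wt c)))) *
      (((-1:ℝ) ^ (par b * (par c + par b)) * xi c * xi b * qp q (bform (wt c) (wt c)) *
          qp q (bform (rho k) (wt c - wt b))) *
        ((-1:ℝ) ^ (par c * (par a + par c)) * xi a * xi c * qp q (bform (wt a) (wt a)) *
          qp q (bform (rho k) (wt a - wt c)))) =
      (-1:ℝ) ^ (par b * (par a + par b)) * xi a * xi b * qp q (bform (wt a) (wt a)) *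
        qp q (bform (rho k) (wt a - wt b)) := by
    calc ((-1:ℝ) ^ ((par b + par c) * (par a + par c)) *
        qp q (-(bform (wt c) (wt c)))) *
      (((-1:ℝ) ^ (par b * (par c + par b)) * xi c * xi b * qp q (bform (wt c) (wt c)) *
          qp q (bform (rho k) (wt c - wt b))) *
        ((-1:ℝ) ^ (par c * (par a + par c)) * xi a * xi c * qp q (bform (wt a) (wt a)) *
          qp q (bform (rho k) (wt a - wt c))))
        = ((-1:ℝ) ^ ((par b + par c) * (par a + par c)) *
            ((-1:ℝ) ^ (par c * (par a + par c)) * (-1:ℝ) ^ (par b * (par c + par b)))) *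
          (xi c * xi c) *
          (qp q (-(bform (wt c) (wt c))) * qp q (bform (wt c) (wt c))) *
          (xi a * xi b) * qp q (bform (wt a) (wt a)) *
          (qp q (bform (rho k) (wt a - wt c)) * qp q (bform (rho k) (wt c - wt b))) := by
            ring
      _ = _ := by rw [hsgn, xi_sq, hQ, hR]; ring
  rw [hcoef1, hcoef2]
  rfl

end Osp2n
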